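/- arXiv:2601.00683 — 5 statements merged into one kernel-verified Lean document; each statement's English description precedes it below -/
import Mathlib

section
/- Let R be a commutative ring, E an n×n matrix over R, and I, J ⊆ {1,…,n} subsets with |I| = |J| = k ≥ 1. Then the k×k minor det( (adj E)_{I,J} ) of the adjugate matrix of E is divisible by (det E)^{k−1} in R. -/
/-- The `k×k` submatrix of `E` with rows indexed by `I` and columns by `J`
(both taken in increasing order). -/
noncomputable def Matrix.subMinorMatrix {R : Type*} [CommRing R] {n : ℕ}
    (E : Matrix (Fin n) (Fin n) R) (k : ℕ) (I J : Finset (Fin n))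
    (hI : I.card = k) (hJ : J.card = k) : Matrix (Fin k) (Fin k) R :=
  E.submatrix (fun a => (I.orderIsoOfFin hI a : Fin n)) (fun a => (J.orderIsoOfFin hJ a : Fin n))

/-- The `(I,J)`-minor of `E`: the determinant of the submatrix of `E` with rows
indexed by `I` and columns by `J`. -/
noncomputable def Matrix.subMinor {R : Type*} [CommRing R] {n : ℕ}
    (E : Matrix (Fin n) (Fin n) R) (k : ℕ) (I J : Finset (Fin n))
    (hI : I.card = k) (hJ : J.card = k) : R :=
  (E.subMinorMatrix k I J hI hJ).det

/-- Split `Fin n` as the disjoint union of a finset `I` (of size `k`) and its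
complement (of size `l`). -/
noncomputable def finsetSplitEquiv {n k l : ℕ} (I : Finset (Fin n))
    (hI : I.card = k) (hIc : Iᶜ.card = l) : Fin k ⊕ Fin l ≃ Fin n :=
  (Equiv.sumCongr (I.orderIsoOfFin hI).toEquiv
      (((Iᶜ).orderIsoOfFin hIc).toEquiv.trans
        (Equiv.subtypeEquivRight (fun _ => Finset.mem_compl)))).trans
    (Equiv.sumCompl (· ∈ I))

theorem finsetSplitEquiv_inl {n k l : ℕ} (I : Finset (Fin n))
    (hI : I.card = k) (hIc : Iᶜ.card = l) (a : Fin k) :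
    finsetSplitEquiv I hI hIc (Sum.inl a) = (I.orderIsoOfFin hI a : Fin n) := rfl

/-- Core identity: for any equivalences splitting the index set, there is `c` with
`det E * det ((adj E)_{I,J}) = (det E)^k * c`. -/
theorem jacobi_key {R : Type*} [CommRing R] {n k l : ℕ}
    (E : Matrix (Fin n) (Fin n) R) (e1 e2 : Fin k ⊕ Fin l ≃ Fin n) :
    ∃ c : R, E.det * ((E.adjugate).submatrix (e1 ∘ Sum.inl) (e2 ∘ Sum.inl)).det
      = E.det ^ k * c := by
  classical
  set G := E.adjugate with hG
  set P : Matrix (Fin k) (Fin k) R := G.submatrix (e1 ∘ Sum.inl) (e2 ∘ Sum.inl) with hP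
  set Q : Matrix (Fin l) (Fin k) R := G.submatrix (e1 ∘ Sum.inr) (e2 ∘ Sum.inl) with hQ
  set Nk : Matrix (Fin k ⊕ Fin l) (Fin k ⊕ Fin l) R := Matrix.fromBlocks P 0 Q 1 with hNkdef
  set N : Matrix (Fin n) (Fin n) R := Nk.submatrix e1.symm e2.symm with hNdef
  set σ : Equiv.Perm (Fin k ⊕ Fin l) := e2.trans e1.symm with hσ
  set ε : R := ((Equiv.Perm.sign σ : ℤ) : R) with hε
  set D : Matrix (Fin l) (Fin l) R :=
    Matrix.of (fun b' b => E (e2 (Sum.inr b')) (e1 (Sum.inr b))) with hD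
  set T : Matrix (Fin k) (Fin l) R :=
    Matrix.of (fun a b => E (e2 (Sum.inl a)) (e1 (Sum.inr b))) with hT
  have hNk : Nk.det = P.det := by
    rw [hNkdef, Matrix.det_fromBlocks_zero₁₂, Matrix.det_one, mul_one]
  have hεε : ε * ε = 1 := by
    rw [hε, ← Int.cast_mul, ← Units.val_mul, ← pow_two, Int.units_sq, Units.val_one, Int.cast_one]
  have hN : N.det = ε * P.det := by
    have h1 : N = (Nk.submatrix σ id).submatrix e2.symm e2.symm := by
      ext r c
      simp [hNdef, hσ, Matrix.submatrix_apply]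
    rw [h1, Matrix.det_submatrix_equiv_self, Matrix.det_permute, hNk]
  -- the column computations
  have hcol1 : ∀ (r : Fin n) (a : Fin k),
      (E * N) r (e2 (Sum.inl a)) = E.det * (if r = e2 (Sum.inl a) then 1 else 0) := by
    intro r a
    have h2 : (E * N) r (e2 (Sum.inl a)) = ∑ s, E r (e1 s) * G (e1 s) (e2 (Sum.inl a)) := by
      rw [Matrix.mul_apply,
        ← Equiv.sum_comp e1 (fun t => E r t * N t (e2 (Sum.inl a)))]
      refine Finset.sum_congr rfl fun s _ => ?_
      rcases s with a' | b' <;>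
        simp [hNdef, hNkdef, hP, hQ, Matrix.submatrix_apply]
    rw [h2, Equiv.sum_comp e1 (fun t => E r t * G t (e2 (Sum.inl a))), ← Matrix.mul_apply,
      hG, Matrix.mul_adjugate]
    simp [Matrix.one_apply]
  have hcol2 : ∀ (r : Fin n) (b : Fin l),
      (E * N) r (e2 (Sum.inr b)) = E r (e1 (Sum.inr b)) := by
    intro r b
    rw [Matrix.mul_apply,
      ← Equiv.sum_comp e1 (fun t => E r t * N t (e2 (Sum.inr b))), Fintype.sum_sum_type]
    simp [hNdef, hNkdef, Matrix.submatrix_apply, Matrix.one_apply]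
  have hmul : (E * N).submatrix e2 e2
      = Matrix.fromBlocks (E.det • (1 : Matrix (Fin k) (Fin k) R)) T 0 D := by
    ext p q
    rcases p with a' | b' <;> rcases q with a | b <;>
      simp [Matrix.submatrix_apply, hcol1, hcol2, hD, hT, Matrix.one_apply,
        e2.injective.eq_iff]
  have hdetW : ((E * N).submatrix e2 e2).det = E.det ^ k * D.det := by
    rw [hmul, Matrix.det_fromBlocks_zero₂₁, Matrix.det_smul, Matrix.det_one, mul_one,
      Fintype.card_fin]
  have hmain : E.det * (ε * P.det) = E.det ^ k * D.det := by
    rw [← hN, ← Matrix.det_mul, ← Matrix.det_submatrix_equiv_self e2 (E * N), hdetW]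
  exact ⟨ε * D.det, by linear_combination ε * hmain - E.det * P.det * hεε⟩

/-- **Jacobi's lemma (divisibility form).**  For an `n×n` matrix `E` over a commutative
ring `R` and subsets `I, J ⊆ {1,…,n}` with `|I| = |J| = k ≥ 1`, the `k×k` minor
`det((adj E)_{I,J})` of the adjugate of `E` is divisible by `(det E)^(k-1)`. -/
theorem jacobi_adjugate_minor_dvd {R : Type*} [CommRing R] {n k : ℕ} (hk : 1 ≤ k)
    (E : Matrix (Fin n) (Fin n) R) (I J : Finset (Fin n))
    (hI : I.card = k) (hJ : J.card = k) :
    E.det ^ (k - 1) ∣ (E.adjugate).subMinor k I J hI hJ := by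
  classical
  have hIc : Iᶜ.card = n - k := by simp [Finset.card_compl, hI]
  have hJc : Jᶜ.card = n - k := by simp [Finset.card_compl, hJ]
  set e1 := finsetSplitEquiv I hI hIc with he1
  set e2 := finsetSplitEquiv J hJ hJc with he2
  set S := MvPolynomial (Fin n × Fin n) ℤ with hS
  set X : Matrix (Fin n) (Fin n) S := Matrix.mvPolynomialX (Fin n) (Fin n) ℤ with hX
  obtain ⟨c, hc⟩ := jacobi_key (R := S) X e1 e2
  have hX0 : X.det ≠ 0 := Matrix.det_mvPolynomialX_ne_zero _ ℤ
  have hkk : X.det ^ k = X.det * X.det ^ (k - 1) := by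
    rw [← pow_succ', Nat.sub_add_cancel hk]
  have hPm : ((X.adjugate).submatrix (e1 ∘ Sum.inl) (e2 ∘ Sum.inl)).det
      = X.det ^ (k - 1) * c := by
    apply mul_left_cancel₀ hX0
    rw [hc, hkk]; ring
  -- map down to R
  set φ : S →+* R := MvPolynomial.eval₂Hom (Int.castRingHom R) (fun p => E p.1 p.2) with hφ
  have hφX : φ.mapMatrix X = E := by
    ext i j
    simp only [hφ, hX, RingHom.mapMatrix_apply, Matrix.map_apply, Matrix.mvPolynomialX_apply]
    exact MvPolynomial.eval₂Hom_X' _ _ _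
  have hsub : (E.adjugate).subMinorMatrix k I J hI hJ
      = (E.adjugate).submatrix (e1 ∘ Sum.inl) (e2 ∘ Sum.inl) := by
    ext a b
    simp [Matrix.subMinorMatrix, Matrix.submatrix_apply, he1, he2,
      finsetSplitEquiv_inl]
  refine ⟨φ c, ?_⟩
  have := congrArg φ hPm
  rw [map_mul, map_pow, RingHom.map_det, RingHom.map_det, hφX] at this
  rw [Matrix.subMinor, hsub]
  have h2 : (E.adjugate).submatrix (e1 ∘ Sum.inl) (e2 ∘ Sum.inl)
      = φ.mapMatrix ((X.adjugate).submatrix (e1 ∘ Sum.inl) (e2 ∘ Sum.inl)) := by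
    have h3 := φ.map_adjugate X
    rw [hφX] at h3
    rw [← h3]
    ext a b
    rfl
  rw [h2]
  exact this
end

section
/- Let R be a commutative ring, Λ the exterior algebra over R on generators X_1,…,X_n, and A an n×n matrix over R. Then for every k-element subset K ⊆ {1,…,n} (with products over K taken in increasing index order): ∏_{j∈K} ( Σ_{i=1}^n A_{j,i}·X_i ) = Σ_{I ⊆ {1,…,n}, |I| = k} det(A_{K,I})·X_I, where X_I = X_{i_1}⋯X_{i_k} for I = {i_1 < ⋯ < i_k}. -/
open scoped BigOperators

noncomputable section

variable {R : Type*} [CommRing R] {n : ℕ}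

/-- The generator `X_i` of the exterior algebra on `n` generators over `R`. -/
def Xgen (i : Fin n) : ExteriorAlgebra R (Fin n → R) :=
  ExteriorAlgebra.ι R (Pi.single i 1)

/-- `X_I`: the product of the generators `X_i` for `i ∈ I`, in increasing order. -/
def XIprod (I : Finset (Fin n)) : ExteriorAlgebra R (Fin n → R) :=
  ((I.sort (· ≤ ·)).map fun i => Xgen i).prod

lemma sort_map_eq_ofFn {β : Type*} (s : Finset (Fin n)) {k : ℕ} (h : s.card = k)
    (f : Fin n → β) :
    (s.sort (· ≤ ·)).map f = List.ofFn fun a : Fin k => f (s.orderEmbOfFin h a) := by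
  apply List.ext_getElem
  · simp [h]
  · intro i h1 h2
    simp [Finset.orderEmbOfFin_apply]

lemma XIprod_eq {k : ℕ} (I : Finset (Fin n)) (hI : I.card = k) :
    XIprod (R := R) I =
      ExteriorAlgebra.ιMulti R k fun a => (Pi.single (I.orderEmbOfFin hI a) 1 : Fin n → R) := by
  rw [XIprod, sort_map_eq_ofFn I hI, ExteriorAlgebra.ιMulti_apply]
  rfl

lemma orderEmbOfFin_congr {s t : Finset (Fin n)} {k : ℕ} (h : s = t)
    (hs : s.card = k) (ht : t.card = k) (a : Fin k) :
    s.orderEmbOfFin hs a = t.orderEmbOfFin ht a := by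
  subst h; rfl

/-- The permutation that sorts an injective tuple. -/
def permOfInj {k : ℕ} (r : Fin k → Fin n) (hr : Function.Injective r) :
    Equiv.Perm (Fin k) :=
  (Equiv.ofBijective (fun a => (⟨r a, Finset.mem_image_of_mem r (Finset.mem_univ a)⟩ :
      {x // x ∈ Finset.image r Finset.univ}))
    ((Fintype.bijective_iff_injective_and_card _).mpr
      ⟨fun a b h => hr (congrArg Subtype.val h),
       by rw [Fintype.card_fin, Fintype.card_coe, Finset.card_image_of_injective _ hr,
         Finset.card_univ, Fintype.card_fin]⟩)).trans
    ((Finset.image r Finset.univ).orderIsoOfFin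
      (by rw [Finset.card_image_of_injective _ hr, Finset.card_univ,
        Fintype.card_fin])).toEquiv.symm

lemma orderEmbOfFin_permOfInj {k : ℕ} (r : Fin k → Fin n) (hr : Function.Injective r)
    (h : (Finset.image r Finset.univ).card = k) (a : Fin k) :
    (Finset.image r Finset.univ).orderEmbOfFin h (permOfInj r hr a) = r a := by
  rw [← Finset.coe_orderIsoOfFin_apply]
  simp [permOfInj]

lemma image_orderEmbOfFin_perm (I : Finset (Fin n)) {k : ℕ} (hI : I.card = k)
    (σ : Equiv.Perm (Fin k)) :
    Finset.image (fun a => I.orderEmbOfFin hI (σ a)) Finset.univ = I := by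
  ext x
  simp only [Finset.mem_image, Finset.mem_univ, true_and]
  constructor
  · rintro ⟨a, rfl⟩; exact Finset.orderEmbOfFin_mem I hI (σ a)
  · intro hx
    refine ⟨σ.symm ((I.orderIsoOfFin hI).symm ⟨x, hx⟩), ?_⟩
    rw [Equiv.apply_symm_apply, ← Finset.coe_orderIsoOfFin_apply, OrderIso.apply_symm_apply]

/-- Regrouping a sum over all tuples `Fin k → Fin n`, vanishing on non-injective tuples,
as a sum over `k`-subsets and permutations. -/
lemma sum_tuples_eq_sum_subsets_perms {M : Type*} [AddCommMonoid M] {k : ℕ}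
    (F : (Fin k → Fin n) → M)
    (h0 : ∀ r, ¬ Function.Injective r → F r = 0) :
    ∑ r : Fin k → Fin n, F r =
      ∑ I ∈ (Finset.univ.powersetCard k : Finset (Finset (Fin n))).attach,
        ∑ σ : Equiv.Perm (Fin k),
          F (fun a => I.1.orderEmbOfFin (Finset.mem_powersetCard.mp I.2).2 (σ a)) := by
  classical
  rw [← Finset.sum_filter_add_sum_filter_not Finset.univ (fun r => Function.Injective r) F,
    Finset.sum_eq_zero (fun r hr => h0 r (Finset.mem_filter.mp hr).2), add_zero]
  have key : ∑ r ∈ Finset.filter (fun r => Function.Injective r) Finset.univ, F r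
      = ∑ p ∈ ((Finset.univ.powersetCard k : Finset (Finset (Fin n))).attach ×ˢ
            (Finset.univ : Finset (Equiv.Perm (Fin k)))),
          F (fun a => p.1.1.orderEmbOfFin (Finset.mem_powersetCard.mp p.1.2).2 (p.2 a)) := by
    refine Finset.sum_bij'
      (i := fun r hr => (⟨Finset.image r Finset.univ, Finset.mem_powersetCard.mpr
        ⟨Finset.subset_univ _, by
          simp [Finset.card_image_of_injective _ (Finset.mem_filter.mp hr).2]⟩⟩,
      permOfInj r (Finset.mem_filter.mp hr).2))
      (j := fun p _ => fun a => p.1.1.orderEmbOfFin (Finset.mem_powersetCard.mp p.1.2).2 (p.2 a))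
      ?_ ?_ ?_ ?_ ?_
    · intro r hr
      exact Finset.mem_product.mpr ⟨Finset.mem_attach _ _, Finset.mem_univ _⟩
    · intro p hp
      exact Finset.mem_filter.mpr ⟨Finset.mem_univ _,
        (p.1.1.orderEmbOfFin (Finset.mem_powersetCard.mp p.1.2).2).injective.comp p.2.injective⟩
    · intro r hr
      funext a
      exact orderEmbOfFin_permOfInj r (Finset.mem_filter.mp hr).2 _ a
    · intro p hp
      have hI : p.1.1.card = k := (Finset.mem_powersetCard.mp p.1.2).2
      set r' : Fin k → Fin n :=
        fun a => p.1.1.orderEmbOfFin (Finset.mem_powersetCard.mp p.1.2).2 (p.2 a) with hr'def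
      have himg : Finset.image r' Finset.univ = p.1.1 := image_orderEmbOfFin_perm p.1.1 hI p.2
      have h' : (Finset.image r' Finset.univ).card = k := by rw [himg]; exact hI
      refine Prod.ext (Subtype.ext himg) ?_
      refine Equiv.ext fun a => ?_
      apply ((Finset.image r' Finset.univ).orderEmbOfFin h').injective
      rw [orderEmbOfFin_permOfInj r' _ h' a, orderEmbOfFin_congr himg h' hI]
    · intro r hr
      exact congrArg F (funext fun a =>
        (orderEmbOfFin_permOfInj r (Finset.mem_filter.mp hr).2 _ a).symm)
  rw [key, Finset.sum_product]

/-- In the exterior algebra `Λ` over `R` on generators `X_1, …, X_n`, for any `n×n` matrix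
`A` over `R` and any `k`-element subset `K ⊆ {1,…,n}`, the ordered product over `j ∈ K` of
the linear combinations `∑_i A_{j,i}·X_i` equals `∑_{|I|=k} det(A_{K,I})·X_I`. -/
theorem prod_linear_combination_eq_sum_minor_smul
    (A : Matrix (Fin n) (Fin n) R) (K : Finset (Fin n)) :
    ((K.sort (· ≤ ·)).map fun j => ∑ i : Fin n, A j i • Xgen (R := R) i).prod =
      ∑ I ∈ (Finset.univ.powersetCard K.card : Finset (Finset (Fin n))).attach,
        A.subMinor K.card K I.1 rfl (Finset.mem_powersetCard.mp I.2).2 • XIprod I.1 := by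
  classical
  rw [sort_map_eq_ofFn K rfl]
  have h1 : (List.ofFn fun a : Fin K.card =>
        ∑ i : Fin n, A (K.orderEmbOfFin rfl a) i • Xgen (R := R) i).prod
      = ExteriorAlgebra.ιMulti R K.card
          (fun a => ∑ i : Fin n, A (K.orderEmbOfFin rfl a) i • (Pi.single i 1 : Fin n → R)) := by
    rw [ExteriorAlgebra.ιMulti_apply]
    refine congrArg List.prod (congrArg List.ofFn (funext fun a => ?_))
    rw [map_sum]
    simp only [map_smul, Xgen]
  rw [h1]
  have h2 := MultilinearMap.map_sum (ExteriorAlgebra.ιMulti R K.card).toMultilinearMap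
      (g := fun (a : Fin K.card) (i : Fin n) =>
        A (K.orderEmbOfFin rfl a) i • (Pi.single i 1 : Fin n → R))
  rw [AlternatingMap.coe_multilinearMap] at h2
  rw [h2]
  have h3 : ∀ r : Fin K.card → Fin n,
      ExteriorAlgebra.ιMulti R K.card
          (fun a => A (K.orderEmbOfFin rfl a) (r a) • (Pi.single (r a) 1 : Fin n → R))
        = (∏ a, A (K.orderEmbOfFin rfl a) (r a)) •
            ExteriorAlgebra.ιMulti R K.card (fun a => (Pi.single (r a) 1 : Fin n → R)) :=
    fun r => MultilinearMap.map_smul_univ _ _ _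
  simp only [h3]
  rw [sum_tuples_eq_sum_subsets_perms
      (fun r => (∏ a, A (K.orderEmbOfFin rfl a) (r a)) •
        ExteriorAlgebra.ιMulti R K.card (fun a => (Pi.single (r a) 1 : Fin n → R)))
      (fun r hr => by
        have hz := AlternatingMap.map_eq_zero_of_not_injective
          (ExteriorAlgebra.ιMulti R K.card) (fun a => (Pi.single (r a) 1 : Fin n → R))
          (fun hv => hr fun a b hab => hv (by simp only [hab]))
        simp only [hz, smul_zero])]
  beta_reduce
  refine Finset.sum_congr rfl fun I _ => ?_
  have hI : I.1.card = K.card := (Finset.mem_powersetCard.mp I.2).2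
  have hdet : A.subMinor K.card K I.1 rfl hI
      = ∑ σ : Equiv.Perm (Fin K.card),
          ((Equiv.Perm.sign σ : ℤ) : R) *
            ∏ a, A (K.orderEmbOfFin rfl a) (I.1.orderEmbOfFin hI (σ a)) := by
    rw [Matrix.subMinor, ← Matrix.det_transpose, Matrix.det_apply']
    refine Finset.sum_congr rfl fun σ _ => ?_
    simp [Matrix.subMinorMatrix, Finset.coe_orderIsoOfFin_apply]
  rw [hdet, Finset.sum_smul]
  refine Finset.sum_congr rfl fun σ _ => ?_
  have hperm : (ExteriorAlgebra.ιMulti R K.card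
        fun a => (Pi.single (I.1.orderEmbOfFin hI (σ a)) 1 : Fin n → R))
      = Equiv.Perm.sign σ • ExteriorAlgebra.ιMulti R K.card
          fun a => (Pi.single (I.1.orderEmbOfFin hI a) 1 : Fin n → R) :=
    (ExteriorAlgebra.ιMulti R K.card).map_perm
      (fun a => (Pi.single (I.1.orderEmbOfFin hI a) 1 : Fin n → R)) σ
  rw [hperm, XIprod_eq I.1 hI, Units.smul_def, ← Int.cast_smul_eq_zsmul R, smul_smul,
    mul_comm]

end
end

section
/- For every k ≥ 1 the following identity holds in B: s_k(Z_1,…,Z_k) = k·Σ_{i=1}^n t_i^{k−1}·u_i·v_i. Equivalently, writing p_m = m·Σ_{i=1}^n t_i^{m−1}·u_i·v_i, the elements Z_1, Z_2, … and p_1, p_2, … satisfy Newton's identities p_k = Σ_{i=1}^{k−1} (−1)^{i−1}·Z_i·p_{k−i} + (−1)^{k−1}·k·Z_k for all k ≥ 1. -/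
open scoped BigOperators

set_option synthInstance.maxHeartbeats 1000000
set_option maxHeartbeats 1000000

noncomputable section

variable (R : Type) [CommRing R] (n : ℕ)

/-- The polynomial ring `R[t_1, …, t_n]`. -/
abbrev Pn := MvPolynomial (Fin n) R

/-- `B`: the exterior algebra over `Pn` on the `2n` generators `u_1,…,u_n,v_1,…,v_n`. -/
abbrev Bn := ExteriorAlgebra (Pn R n) ((Fin n ⊕ Fin n) → Pn R n)

/-- The variable `t_i`. -/
def tv (i : Fin n) : Pn R n := MvPolynomial.X i

/-- The exterior generator `u_i`. -/
def uu (i : Fin n) : Bn R n := ExteriorAlgebra.ι (Pn R n) (Pi.single (Sum.inl i) 1)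

/-- The exterior generator `v_i`. -/
def vv (i : Fin n) : Bn R n := ExteriorAlgebra.ι (Pn R n) (Pi.single (Sum.inr i) 1)

/-- `X_l = ∑ t_i^(l-1) u_i` (indices `i` run over `Fin n`, `l ≥ 1`). -/
def Xel (l : ℕ) : Bn R n :=
  ∑ i : Fin n, algebraMap (Pn R n) (Bn R n) (tv R n i ^ (l - 1)) * uu R n i

/-- `Y_l = ∑ t_i^(l-1) v_i`. -/
def Yel (l : ℕ) : Bn R n :=
  ∑ i : Fin n, algebraMap (Pn R n) (Bn R n) (tv R n i ^ (l - 1)) * vv R n i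

/-- `X_I`, the product of the `X_{i+1}` for `i ∈ I`, in increasing order. -/
def XI (I : Finset (Fin n)) : Bn R n := ((I.sort (· ≤ ·)).map fun i => Xel R n (i.1 + 1)).prod

/-- `Y_I`, the product of the `Y_{i+1}` for `i ∈ I`, in increasing order. -/
def YI (I : Finset (Fin n)) : Bn R n := ((I.sort (· ≤ ·)).map fun i => Yel R n (i.1 + 1)).prod

/-- `(1 + p s)⁻¹ = ∑ (-p)^k s^k`, the inverse of `1 + p s` in `Pn[[s]]`. -/
def invOnePlus (p : Pn R n) : PowerSeries (Pn R n) := PowerSeries.mk fun k => (-p) ^ k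

/-- The `i`-th factor `1 + s u_i v_i (1 + t_i s)⁻¹` of the power series defining the `Z_l`. -/
def Zfactor (i : Fin n) : PowerSeries (Bn R n) :=
  1 + PowerSeries.C (uu R n i * vv R n i) *
    PowerSeries.map (algebraMap (Pn R n) (Bn R n)) (PowerSeries.X * invOnePlus R n (tv R n i))

/-- The power series `∏_{i=1}^n (1 + s u_i v_i (1 + t_i s)⁻¹) ∈ B[[s]]`. -/
def Zseries : PowerSeries (Bn R n) := ((List.finRange n).map (Zfactor R n)).prod

/-- `Z_l`, the coefficient of `s^l` in `Zseries`. -/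
def Zel (l : ℕ) : Bn R n := PowerSeries.coeff l (Zseries R n)

/-- The Vandermonde matrix `V = (t_j^(i-1))`. -/
def Vmat : Matrix (Fin n) (Fin n) (Pn R n) := Matrix.of fun i j => tv R n j ^ (i : ℕ)

/-- The Vandermonde determinant `Δ = det V = ∏_{i<j} (t_j - t_i)`. -/
def Dl : Pn R n := (Vmat R n).det


/-- The Newton polynomials, defined recursively by `s_1(x₁) = x₁` and
`s_k(x_1,…,x_k) = ∑_{i=1}^{k-1} (-1)^{i-1}·x_i·s_{k-i}(x_1,…,x_{k-i}) + (-1)^{k-1}·k·x_k`. -/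
def newtonPoly {A : Type*} [Ring A] (x : ℕ → A) : ℕ → A
  | 0 => 0
  | (k + 1) =>
      (∑ i ∈ Finset.range k, ((-1 : ℤ) ^ i) • (x (i + 1) * newtonPoly x (k - i))) +
        ((-1 : ℤ) ^ k) • ((k + 1 : ℕ) • x (k + 1))
  termination_by k => k
  decreasing_by omega

/-- `p_m = m·∑_{i=1}^n t_i^{m-1}·u_i·v_i ∈ B`. -/
def pB (n m : ℕ) : Bn ℤ n :=
  m • ∑ i : Fin n, algebraMap (Pn ℤ n) (Bn ℤ n) (tv ℤ n i ^ (m - 1)) * (uu ℤ n i * vv ℤ n i)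

section Generic

variable {A : Type} [Ring A]

/-- The operator `f ↦ s f'` on power series, over any (possibly noncommutative) ring. -/
def Dops (f : PowerSeries A) : PowerSeries A :=
  PowerSeries.mk fun k => k • PowerSeries.coeff k f

lemma coeff_Dops (k : ℕ) (f : PowerSeries A) :
    PowerSeries.coeff k (Dops f) = k • PowerSeries.coeff k f :=
  PowerSeries.coeff_mk _ _

lemma Dops_one : Dops (1 : PowerSeries A) = 0 := by
  ext k
  rcases k with _ | k <;> simp [coeff_Dops, PowerSeries.coeff_one]

lemma Dops_add (f g : PowerSeries A) : Dops (f + g) = Dops f + Dops g := by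
  ext k; simp [coeff_Dops]

lemma Dops_mul (f g : PowerSeries A) : Dops (f * g) = Dops f * g + f * Dops g := by
  ext k
  rw [map_add, coeff_Dops, PowerSeries.coeff_mul, PowerSeries.coeff_mul,
    PowerSeries.coeff_mul, Finset.smul_sum, ← Finset.sum_add_distrib]
  refine Finset.sum_congr rfl fun p hp => ?_
  rw [Finset.HasAntidiagonal.mem_antidiagonal] at hp
  rw [coeff_Dops, coeff_Dops, smul_mul_assoc, mul_smul_comm, ← hp, add_smul]

lemma Dops_C_mul (a : A) (f : PowerSeries A) :
    Dops (PowerSeries.C a * f) = PowerSeries.C a * Dops f := by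
  ext k
  rw [coeff_Dops, PowerSeries.coeff_C_mul, PowerSeries.coeff_C_mul, coeff_Dops,
    mul_smul_comm]

/-- A series with central coefficients commutes with every series. -/
lemma central_coeff_comm (g : PowerSeries A)
    (h : ∀ k (b : A), Commute (PowerSeries.coeff k g) b) (f : PowerSeries A) :
    f * g = g * f := by
  ext k
  rw [PowerSeries.coeff_mul, PowerSeries.coeff_mul]
  refine Finset.sum_nbij' (fun p => (p.2, p.1)) (fun p => (p.2, p.1)) ?_ ?_ ?_ ?_ ?_
  · intro p hp; simp only [Finset.HasAntidiagonal.mem_antidiagonal] at *; omega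
  · intro p hp; simp only [Finset.HasAntidiagonal.mem_antidiagonal] at *; omega
  · intro p hp; rfl
  · intro p hp; rfl
  · intro p hp; exact (h p.2 _).symm

end Generic

section Ext

variable {S : Type} [CommRing S] {M : Type} [AddCommGroup M] [Module S M]

lemma pair_central (x y : M) (b : ExteriorAlgebra S M) :
    Commute (ExteriorAlgebra.ι S x * ExteriorAlgebra.ι S y) b := by
  induction b using ExteriorAlgebra.induction with
  | algebraMap r => exact (Algebra.commutes r _).symm
  | ι m =>
      have hxm : ExteriorAlgebra.ι S x * ExteriorAlgebra.ι S m
          = -(ExteriorAlgebra.ι S m * ExteriorAlgebra.ι S x) :=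
        eq_neg_of_add_eq_zero_left (ExteriorAlgebra.ι_add_mul_swap x m)
      have hym : ExteriorAlgebra.ι S y * ExteriorAlgebra.ι S m
          = -(ExteriorAlgebra.ι S m * ExteriorAlgebra.ι S y) :=
        eq_neg_of_add_eq_zero_left (ExteriorAlgebra.ι_add_mul_swap y m)
      show _ * _ = _ * _
      rw [mul_assoc, hym, mul_neg, ← mul_assoc, hxm, neg_mul, neg_neg, mul_assoc]
  | mul a b ha hb => exact ha.mul_right hb
  | add a b ha hb => exact ha.add_right hb

lemma pair_sq_zero (x y : M) :
    (ExteriorAlgebra.ι S x * ExteriorAlgebra.ι S y) *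
      (ExteriorAlgebra.ι S x * ExteriorAlgebra.ι S y) = 0 := by
  have h : ExteriorAlgebra.ι S y * ExteriorAlgebra.ι S x
      = -(ExteriorAlgebra.ι S x * ExteriorAlgebra.ι S y) :=
    eq_neg_of_add_eq_zero_left (ExteriorAlgebra.ι_add_mul_swap y x)
  have key : (ExteriorAlgebra.ι S x * ExteriorAlgebra.ι S y) *
      (ExteriorAlgebra.ι S x * ExteriorAlgebra.ι S y)
      = ExteriorAlgebra.ι S x * (ExteriorAlgebra.ι S y * ExteriorAlgebra.ι S x) *
        ExteriorAlgebra.ι S y := by noncomm_ring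
  rw [key, h, mul_neg, ← mul_assoc, ExteriorAlgebra.ι_sq_zero, zero_mul, neg_zero, zero_mul]

end Ext

section Main

/-- The series `s (1 + t_i s)⁻¹`, pushed into `B[[s]]`. -/
def gser (i : Fin n) : PowerSeries (Bn R n) :=
  PowerSeries.map (algebraMap (Pn R n) (Bn R n)) (PowerSeries.X * invOnePlus R n (tv R n i))

lemma Zfactor_eq (i : Fin n) :
    Zfactor R n i = 1 + PowerSeries.C (uu R n i * vv R n i) * gser R n i := rfl

lemma uv_central (i : Fin n) (b : Bn R n) : Commute (uu R n i * vv R n i) b := by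
  unfold uu vv; exact pair_central _ _ b

lemma uv_sq (i : Fin n) : (uu R n i * vv R n i) * (uu R n i * vv R n i) = 0 := by
  unfold uu vv; exact pair_sq_zero _ _

lemma coeff_gser_zero (i : Fin n) : PowerSeries.coeff 0 (gser R n i) = 0 := by
  rw [gser, PowerSeries.coeff_map, PowerSeries.coeff_zero_X_mul, map_zero]

lemma coeff_gser_succ (i : Fin n) (k : ℕ) :
    PowerSeries.coeff (k + 1) (gser R n i)
      = algebraMap (Pn R n) (Bn R n) ((-tv R n i) ^ k) := by
  rw [gser, PowerSeries.coeff_map, PowerSeries.coeff_succ_X_mul, invOnePlus,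
    PowerSeries.coeff_mk]

lemma CD_central (i : Fin n) (k : ℕ) (b : Bn R n) :
    Commute (PowerSeries.coeff k
      (PowerSeries.C (uu R n i * vv R n i) * Dops (gser R n i))) b := by
  rw [PowerSeries.coeff_C_mul, coeff_Dops, gser, PowerSeries.coeff_map]
  exact (uv_central R n i b).mul_left
    ((Commute.smul_left (Algebra.commutes _ b) k))

lemma D_Zfactor (i : Fin n) :
    Dops (Zfactor R n i)
      = PowerSeries.C (uu R n i * vv R n i) * Dops (gser R n i) := by
  rw [Zfactor_eq, Dops_add, Dops_one, Dops_C_mul, zero_add]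

lemma F_mul_CD (i : Fin n) :
    Zfactor R n i * (PowerSeries.C (uu R n i * vv R n i) * Dops (gser R n i))
      = PowerSeries.C (uu R n i * vv R n i) * Dops (gser R n i) := by
  set a := uu R n i * vv R n i with ha
  have hgC : gser R n i * PowerSeries.C a
      = PowerSeries.C a * gser R n i := by
    refine (central_coeff_comm _ ?_ _).symm
    intro k b
    rw [gser, PowerSeries.coeff_map]
    exact Algebra.commutes _ b
  rw [Zfactor_eq]
  have h1 : (1 + PowerSeries.C a * gser R n i)
        * (PowerSeries.C a * Dops (gser R n i))
      = PowerSeries.C a * Dops (gser R n i)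
        + PowerSeries.C a * (gser R n i * PowerSeries.C a)
          * Dops (gser R n i) := by noncomm_ring
  rw [h1, hgC, ← mul_assoc, ← map_mul, uv_sq, map_zero, zero_mul, zero_mul, add_zero]

lemma D_prod (L : List (Fin n)) :
    Dops ((L.map (Zfactor R n)).prod)
      = (L.map (Zfactor R n)).prod *
        (L.map fun i =>
          PowerSeries.C (uu R n i * vv R n i) * Dops (gser R n i)).sum := by
  induction L with
  | nil => simp [Dops_one]
  | cons i L ih =>
      simp only [List.map_cons, List.prod_cons, List.sum_cons]
      rw [Dops_mul, ih, D_Zfactor]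
      have hcomm : (L.map (Zfactor R n)).prod
            * (PowerSeries.C (uu R n i * vv R n i) * Dops (gser R n i))
          = (PowerSeries.C (uu R n i * vv R n i) * Dops (gser R n i))
            * (L.map (Zfactor R n)).prod :=
        central_coeff_comm _ (CD_central R n i) _
      rw [mul_add,
        mul_assoc (Zfactor R n i) ((L.map (Zfactor R n)).prod)
          (PowerSeries.C (uu R n i * vv R n i) * Dops (gser R n i)),
        hcomm,
        ← mul_assoc (Zfactor R n i)
          (PowerSeries.C (uu R n i * vv R n i) * Dops (gser R n i))
          ((L.map (Zfactor R n)).prod),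
        F_mul_CD,
        mul_assoc (Zfactor R n i) ((L.map (Zfactor R n)).prod)]

end Main

section MainZ

/-- The logarithmic-derivative sum `∑ C (u_i v_i) * D (gser i)`. -/
def Ssum : PowerSeries (Bn ℤ n) :=
  ((List.finRange n).map fun i =>
    PowerSeries.C (uu ℤ n i * vv ℤ n i) * Dops (gser ℤ n i)).sum

lemma coeff_Ssum_zero : PowerSeries.coeff 0 (Ssum n) = 0 := by
  rw [Ssum, map_list_sum, List.map_map]
  refine List.sum_eq_zero ?_
  intro x hx
  rw [List.mem_map] at hx
  obtain ⟨i, -, rfl⟩ := hx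
  show PowerSeries.coeff 0 (_ * Dops (gser ℤ n i)) = 0
  rw [PowerSeries.coeff_C_mul, coeff_Dops, zero_smul, mul_zero]

lemma coeff_Ssum_succ (m : ℕ) :
    PowerSeries.coeff (m + 1) (Ssum n) = ((-1 : ℤ) ^ m) • pB n (m + 1) := by
  rw [Ssum, map_list_sum, List.map_map, ← List.ofFn_eq_map, List.sum_ofFn]
  simp only [Function.comp_apply, PowerSeries.coeff_C_mul, coeff_Dops, coeff_gser_succ]
  rw [pB, Finset.smul_sum, Finset.smul_sum]
  refine Finset.sum_congr rfl fun i _ => ?_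
  rw [mul_smul_comm, smul_comm ((-1 : ℤ) ^ m) (m + 1), ← Algebra.commutes,
    neg_pow, map_mul, map_pow, map_neg, map_one, mul_assoc, zsmul_eq_mul]
  push_cast
  ring_nf

lemma Zel_zero : Zel ℤ n 0 = 1 := by
  rw [Zel, Zseries, PowerSeries.coeff_zero_eq_constantCoeff, map_list_prod]
  refine List.prod_eq_one ?_
  intro x hx
  rw [List.map_map, List.mem_map] at hx
  obtain ⟨i, -, rfl⟩ := hx
  show PowerSeries.constantCoeff (Zfactor ℤ n i) = 1
  have hg : PowerSeries.constantCoeff (gser ℤ n i) = 0 := by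
    have := coeff_gser_zero ℤ n i
    rwa [PowerSeries.coeff_zero_eq_constantCoeff] at this
  rw [Zfactor_eq, map_add, map_one, map_mul, PowerSeries.constantCoeff_C, hg,
    mul_zero, add_zero]

lemma key_id (m : ℕ) :
    ((m + 1) • Zel ℤ n (m + 1)) =
      ∑ i ∈ Finset.range (m + 1),
        Zel ℤ n i * (((-1 : ℤ) ^ (m - i)) • pB n (m + 1 - i)) := by
  have hDF := D_prod ℤ n (List.finRange n)
  have e1 : ((List.finRange n).map (Zfactor ℤ n)).prod = Zseries ℤ n := rfl
  have e2 : ((List.finRange n).map fun i =>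
      PowerSeries.C (uu ℤ n i * vv ℤ n i) * Dops (gser ℤ n i)).sum = Ssum n := rfl
  rw [e1, e2] at hDF
  have h := congrArg (PowerSeries.coeff (m + 1)) hDF
  rw [coeff_Dops, PowerSeries.coeff_mul,
    Finset.Nat.sum_antidiagonal_eq_sum_range_succ_mk] at h
  rw [Finset.sum_range_succ, Nat.sub_self, coeff_Ssum_zero, mul_zero, add_zero] at h
  simp only [Zel]
  rw [h]
  refine Finset.sum_congr rfl fun i hi => ?_
  rw [Finset.mem_range] at hi
  have e3 : m + 1 - i = (m - i) + 1 := by omega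
  dsimp only
  rw [e3, coeff_Ssum_succ]

lemma newton_id (m : ℕ) :
    pB n (m + 1) =
      (∑ j ∈ Finset.range m, ((-1 : ℤ) ^ j) • (Zel ℤ n (j + 1) * pB n (m - j))) +
        ((-1 : ℤ) ^ m) • ((m + 1) • Zel ℤ n (m + 1)) := by
  have hkey := key_id n m
  rw [Finset.sum_range_succ'] at hkey
  rw [Zel_zero, one_mul, Nat.sub_zero, Nat.sub_zero] at hkey
  have hpow : ((-1 : ℤ) ^ m) * ((-1 : ℤ) ^ m) = 1 := by
    rw [← pow_add, neg_one_pow_eq_pow_mod_two, show (m + m) % 2 = 0 by omega, pow_zero]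
  rw [hkey, smul_add, smul_smul, hpow, one_smul]
  have hz : (∑ j ∈ Finset.range m, ((-1 : ℤ) ^ j) • (Zel ℤ n (j + 1) * pB n (m - j))) +
      ((-1 : ℤ) ^ m) • (∑ i ∈ Finset.range m,
        Zel ℤ n (i + 1) * (((-1 : ℤ) ^ (m - (i + 1))) • pB n (m + 1 - (i + 1)))) = 0 := by
    rw [Finset.smul_sum, ← Finset.sum_add_distrib]
    refine Finset.sum_eq_zero fun i hi => ?_
    rw [Finset.mem_range] at hi
    have e4 : m + 1 - (i + 1) = m - i := by omega
    rw [e4, mul_smul_comm, smul_smul]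
    have hcoe : ((-1 : ℤ) ^ m) * ((-1 : ℤ) ^ (m - (i + 1))) = -((-1 : ℤ) ^ i) := by
      rw [← pow_add, neg_one_pow_eq_pow_mod_two,
        show (m + (m - (i + 1))) % 2 = (i + 1) % 2 by omega,
        ← neg_one_pow_eq_pow_mod_two, pow_succ]
      ring
    rw [hcoe, neg_smul, add_neg_cancel]
  rw [← add_assoc, hz, zero_add]

lemma part1 (k : ℕ) : 1 ≤ k → newtonPoly (fun m => Zel ℤ n m) k = pB n k := by
  induction k using Nat.strong_induction_on with
  | _ k ih =>
    intro hk
    obtain ⟨m, rfl⟩ : ∃ m, k = m + 1 := ⟨k - 1, by omega⟩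
    rw [newtonPoly, newton_id n m]
    congr 1
    refine Finset.sum_congr rfl fun i hi => ?_
    rw [Finset.mem_range] at hi
    have := ih (m - i) (by omega) (by omega)
    simp only [this]

end MainZ

/-- For every `k ≥ 1` one has `s_k(Z_1,…,Z_k) = k·∑_{i=1}^n t_i^{k-1}·u_i·v_i` in `B`;
equivalently, the `Z_l` and the `p_m = m·∑ t_i^{m-1} u_i v_i` satisfy Newton's identities
`p_k = ∑_{i=1}^{k-1} (-1)^{i-1}·Z_i·p_{k-i} + (-1)^{k-1}·k·Z_k`. -/
theorem newton_poly_Z_eq (n : ℕ) (hn : 1 ≤ n) (k : ℕ) (hk : 1 ≤ k) :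
    newtonPoly (fun m => Zel ℤ n m) k = pB n k ∧
      pB n k = (∑ j ∈ Finset.range (k - 1),
          ((-1 : ℤ) ^ j) • (Zel ℤ n (j + 1) * pB n (k - (j + 1)))) +
        ((-1 : ℤ) ^ (k - 1)) • (k • Zel ℤ n k) := by
  obtain ⟨m, rfl⟩ : ∃ m, k = m + 1 := ⟨k - 1, by omega⟩
  refine ⟨part1 n (m + 1) hk, ?_⟩
  simpa using newton_id n m

end
end

section
/- In the power series ring B[[s]], let E(s) = ∏_{i=1}^n (1 − t_i s), X(s) = Σ_{i=1}^n u_i·(1 − t_i s)^{−1}, Y(s) = Σ_{i=1}^n v_i·(1 − t_i s)^{−1}, and S(s) = Σ_{i=1}^n u_i v_i·(1 − t_i s)^{−2}. Then E(s)·( X(s)·Y(s) − S(s) ) is a polynomial in s of degree at most n − 2, i.e., its coefficient of s^l vanishes for every l ≥ n − 1. In particular (taking the coefficient of s^{n−1}), the identity Σ_{i=0}^{n−1} (−1)^{i+1}·e_i·( (n−i)·Σ_{k=1}^n t_k^{n−i−1}·u_k·v_k − Σ_{j=0}^{n−i−1} X_{n−i−j}·Y_{j+1} ) = 0 holds in B.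 -/
open scoped BigOperators

set_option synthInstance.maxHeartbeats 1000000
set_option maxHeartbeats 1000000

noncomputable section

variable (R : Type) [CommRing R] (n : ℕ)

/-- `(1 - p s)⁻¹ = ∑ p^k s^k`, the inverse of `1 - p s` in `Pn[[s]]`. -/
def geomSeries (p : Pn R n) : PowerSeries (Pn R n) := PowerSeries.mk fun k => p ^ k

/-- `E(s) = ∏_{i=1}^n (1 - t_i s)`. -/
def Eseries : PowerSeries (Pn R n) :=
  ∏ i : Fin n, (1 - PowerSeries.C (tv R n i) * PowerSeries.X)

/-- `X(s) = ∑_{i=1}^n u_i (1 - t_i s)⁻¹ ∈ B[[s]]`. -/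
def Xseries : PowerSeries (Bn R n) :=
  ∑ i : Fin n, PowerSeries.C (uu R n i) *
    PowerSeries.map (algebraMap (Pn R n) (Bn R n)) (geomSeries R n (tv R n i))

/-- `Y(s) = ∑_{i=1}^n v_i (1 - t_i s)⁻¹ ∈ B[[s]]`. -/
def Yseries : PowerSeries (Bn R n) :=
  ∑ i : Fin n, PowerSeries.C (vv R n i) *
    PowerSeries.map (algebraMap (Pn R n) (Bn R n)) (geomSeries R n (tv R n i))

/-- `S(s) = ∑_{i=1}^n u_i v_i (1 - t_i s)⁻² ∈ B[[s]]`. -/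
def Sseries : PowerSeries (Bn R n) :=
  ∑ i : Fin n, PowerSeries.C (uu R n i * vv R n i) *
    PowerSeries.map (algebraMap (Pn R n) (Bn R n)) (geomSeries R n (tv R n i) ^ 2)


section AuxLemmas

lemma central_map (f : PowerSeries (Pn R n)) (g : PowerSeries (Bn R n)) :
    g * PowerSeries.map (algebraMap (Pn R n) (Bn R n)) f
      = PowerSeries.map (algebraMap (Pn R n) (Bn R n)) f * g := by
  ext k
  rw [PowerSeries.coeff_mul, PowerSeries.coeff_mul]
  conv_rhs => rw [← Finset.HasAntidiagonal.map_swap_antidiagonal, Finset.sum_map]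
  refine Finset.sum_congr rfl fun p _ => ?_
  simp only [Function.Embedding.coeFn_mk, Prod.fst_swap, Prod.snd_swap, PowerSeries.coeff_map]
  exact (Algebra.commutes _ _).symm

lemma one_sub_mul_geom (p : Pn R n) :
    ((1 : PowerSeries (Pn R n)) - PowerSeries.C p * PowerSeries.X) * geomSeries R n p
      = 1 := by
  ext k
  rw [sub_mul, one_mul, map_sub]
  cases k with
  | zero =>
      simp [geomSeries, PowerSeries.coeff_zero_eq_constantCoeff, mul_assoc]
  | succ k =>
      rw [mul_assoc, PowerSeries.coeff_C_mul, PowerSeries.coeff_succ_X_mul]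
      simp [geomSeries, pow_succ, mul_comm, PowerSeries.coeff_one]

lemma coeff_prod_one_sub (S : Finset (Fin n)) (k : ℕ) :
    PowerSeries.coeff k
        (∏ i ∈ S, (1 - PowerSeries.C (tv R n i) * PowerSeries.X)) =
      (-1) ^ k * ∑ A ∈ S.powersetCard k, ∏ i ∈ A, tv R n i := by
  induction S using Finset.induction_on generalizing k with
  | empty =>
      cases k with
      | zero => simp
      | succ k =>
          rw [Finset.powersetCard_eq_empty.2 (by simp), Finset.sum_empty, mul_zero]
          simp [PowerSeries.coeff_one]
  | @insert a S ha ih =>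
      rw [Finset.prod_insert ha, sub_mul, one_mul, map_sub]
      cases k with
      | zero =>
          rw [ih 0]
          simp [mul_assoc, PowerSeries.coeff_zero_eq_constantCoeff]
      | succ k =>
          rw [ih (k + 1), mul_assoc, PowerSeries.coeff_C_mul,
            PowerSeries.coeff_succ_X_mul, ih k, Finset.powersetCard_succ_insert ha]
          have hdisj : Disjoint (S.powersetCard (k + 1))
              ((S.powersetCard k).image (insert a)) := by
            rw [Finset.disjoint_left]
            rintro X hX hX'
            rw [Finset.mem_powersetCard] at hX
            rcases Finset.mem_image.1 hX' with ⟨A, _, rfl⟩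
            exact ha (hX.1 (Finset.mem_insert_self a A))
          rw [Finset.sum_union hdisj]
          rw [Finset.sum_image (fun A hA B hB hAB => by
            rw [Finset.mem_coe, Finset.mem_powersetCard] at hA hB
            have haA : a ∉ A := fun h => ha (hA.1 h)
            have haB : a ∉ B := fun h => ha (hB.1 h)
            rw [← Finset.erase_insert haA, ← Finset.erase_insert haB, hAB])]
          have hins : (∑ A ∈ S.powersetCard k, ∏ i ∈ insert a A, tv R n i)
              = tv R n a * ∑ A ∈ S.powersetCard k, ∏ i ∈ A, tv R n i := by
            rw [Finset.mul_sum]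
            refine Finset.sum_congr rfl fun A hA => ?_
            rw [Finset.mem_powersetCard] at hA
            exact Finset.prod_insert (fun h => ha (hA.1 h))
          rw [hins]
          ring

lemma coeff_prod_one_sub_zero (S : Finset (Fin n)) (k : ℕ) (h : S.card < k) :
    PowerSeries.coeff k
        (∏ i ∈ S, (1 - PowerSeries.C (tv R n i) * PowerSeries.X)) = 0 := by
  rw [coeff_prod_one_sub, Finset.powersetCard_eq_empty.2 h, Finset.sum_empty, mul_zero]

end AuxLemmas


section AuxLemmas2

lemma sign_helper {A : Type*} [Ring A] (i : ℕ) (c x y : A) :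
    (-1 : A) ^ (i + 1) * (c * (x - y)) = (-1 : A) ^ i * c * (y - x) := by
  rw [pow_succ, mul_assoc ((-1 : A) ^ i), mul_assoc ((-1 : A) ^ i), neg_one_mul,
    ← mul_neg, neg_sub]

lemma rearrange (u v : Bn R n) (e g h : PowerSeries (Pn R n)) :
    PowerSeries.map (algebraMap (Pn R n) (Bn R n)) e *
        ((PowerSeries.C u * PowerSeries.map (algebraMap (Pn R n) (Bn R n)) g) *
          (PowerSeries.C v * PowerSeries.map (algebraMap (Pn R n) (Bn R n)) h)) =
      PowerSeries.C (u * v) *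
        PowerSeries.map (algebraMap (Pn R n) (Bn R n)) (e * (g * h)) := by
  set U := PowerSeries.C u with hU
  set V := PowerSeries.C v with hV
  set E := PowerSeries.map (algebraMap (Pn R n) (Bn R n)) e with hE
  set G := PowerSeries.map (algebraMap (Pn R n) (Bn R n)) g with hG
  set H := PowerSeries.map (algebraMap (Pn R n) (Bn R n)) h with hH
  have h1 : V * G = G * V := central_map R n g V
  have h2 : (U * V) * E = E * (U * V) := central_map R n e (U * V)
  simp only [map_mul]
  have key : U * G * (V * H) = U * V * (G * H) := by
    rw [mul_assoc U G (V * H), ← mul_assoc G V H, ← h1, mul_assoc V G H,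
      ← mul_assoc U V (G * H)]
  rw [key, ← mul_assoc E (U * V) (G * H), ← h2, mul_assoc (U * V) E (G * H)]

lemma rearrangeS (w : Bn R n) (e g : PowerSeries (Pn R n)) :
    PowerSeries.map (algebraMap (Pn R n) (Bn R n)) e *
        (PowerSeries.C w * PowerSeries.map (algebraMap (Pn R n) (Bn R n)) (g ^ 2)) =
      PowerSeries.C w *
        PowerSeries.map (algebraMap (Pn R n) (Bn R n)) (e * (g * g)) := by
  calc PowerSeries.map (algebraMap (Pn R n) (Bn R n)) e *
        (PowerSeries.C w * PowerSeries.map (algebraMap (Pn R n) (Bn R n)) (g ^ 2))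
      = (PowerSeries.C w * PowerSeries.map (algebraMap (Pn R n) (Bn R n)) (g ^ 2)) *
          PowerSeries.map (algebraMap (Pn R n) (Bn R n)) e := (central_map R n e _).symm
    _ = PowerSeries.C w * (PowerSeries.map (algebraMap (Pn R n) (Bn R n)) (g ^ 2) *
          PowerSeries.map (algebraMap (Pn R n) (Bn R n)) e) := mul_assoc _ _ _
    _ = PowerSeries.C w * PowerSeries.map (algebraMap (Pn R n) (Bn R n)) (e * (g * g)) := by
        rw [central_map, ← map_mul, sq]

lemma EXYS_eq :
    PowerSeries.map (algebraMap (Pn R n) (Bn R n)) (Eseries R n) *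
        (Xseries R n * Yseries R n - Sseries R n) =
      ∑ i : Fin n, ∑ j ∈ Finset.univ.erase i,
        PowerSeries.C (uu R n i * vv R n j) *
          PowerSeries.map (algebraMap (Pn R n) (Bn R n))
            (∏ k ∈ (Finset.univ.erase i).erase j,
              (1 - PowerSeries.C (tv R n k) * PowerSeries.X)) := by
  have hprod : ∀ i : Fin n, ∀ j ∈ Finset.univ.erase i,
      Eseries R n * (geomSeries R n (tv R n i) * geomSeries R n (tv R n j)) =
        ∏ k ∈ (Finset.univ.erase i).erase j,
          (1 - PowerSeries.C (tv R n k) * PowerSeries.X) := by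
    intro i j hj
    have hfac : Eseries R n =
        (1 - PowerSeries.C (tv R n i) * PowerSeries.X) *
          ((1 - PowerSeries.C (tv R n j) * PowerSeries.X) *
            ∏ k ∈ (Finset.univ.erase i).erase j,
              (1 - PowerSeries.C (tv R n k) * PowerSeries.X)) := by
      rw [show Eseries R n = ∏ k ∈ Finset.univ,
            (1 - PowerSeries.C (tv R n k) * PowerSeries.X) from rfl,
        ← Finset.mul_prod_erase _ _ (Finset.mem_univ i), ← Finset.mul_prod_erase _ _ hj]
    calc Eseries R n * (geomSeries R n (tv R n i) * geomSeries R n (tv R n j))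
        = ((1 - PowerSeries.C (tv R n i) * PowerSeries.X) * geomSeries R n (tv R n i)) *
            (((1 - PowerSeries.C (tv R n j) * PowerSeries.X) * geomSeries R n (tv R n j)) *
              ∏ k ∈ (Finset.univ.erase i).erase j,
                (1 - PowerSeries.C (tv R n k) * PowerSeries.X)) := by
          rw [hfac]; ring
      _ = _ := by rw [one_sub_mul_geom, one_sub_mul_geom, one_mul, one_mul]
  rw [Xseries, Yseries, Sseries, Finset.sum_mul_sum]
  rw [mul_sub, Finset.mul_sum, Finset.mul_sum]
  simp only [Finset.mul_sum]
  simp only [rearrange, rearrangeS]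
  rw [← Finset.sum_sub_distrib]
  refine Finset.sum_congr rfl fun i _ => ?_
  rw [← Finset.sum_erase_add _ _ (Finset.mem_univ i), add_sub_cancel_right]
  exact Finset.sum_congr rfl fun j hj => by rw [hprod i j hj]

lemma coeff_vanish (l : ℕ) (hl : n - 1 ≤ l) :
    PowerSeries.coeff l
        (PowerSeries.map (algebraMap (Pn R n) (Bn R n)) (Eseries R n) *
          (Xseries R n * Yseries R n - Sseries R n)) = 0 := by
  rw [EXYS_eq, map_sum]
  refine Finset.sum_eq_zero fun i _ => ?_
  rw [map_sum]
  refine Finset.sum_eq_zero fun j hj => ?_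
  have hji : j ≠ i := (Finset.mem_erase.1 hj).1
  have h2 : 2 ≤ n := by
    have h1 : 1 < Fintype.card (Fin n) := Fintype.one_lt_card_iff.2 ⟨j, i, hji⟩
    rwa [Fintype.card_fin] at h1
  have hcard : ((Finset.univ.erase i).erase j).card < l := by
    rw [Finset.card_erase_of_mem hj, Finset.card_erase_of_mem (Finset.mem_univ i),
      Finset.card_univ, Fintype.card_fin]
    omega
  rw [PowerSeries.coeff_C_mul, PowerSeries.coeff_map,
    coeff_prod_one_sub_zero R n _ _ hcard, map_zero, mul_zero]

lemma coeff_Xseries (a : ℕ) :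
    PowerSeries.coeff a (Xseries R n) = Xel R n (a + 1) := by
  rw [Xseries, map_sum, Xel]
  refine Finset.sum_congr rfl fun i _ => ?_
  rw [PowerSeries.coeff_C_mul, PowerSeries.coeff_map, geomSeries, PowerSeries.coeff_mk,
    Nat.add_sub_cancel]
  exact (Algebra.commutes _ _).symm

lemma coeff_Yseries (a : ℕ) :
    PowerSeries.coeff a (Yseries R n) = Yel R n (a + 1) := by
  rw [Yseries, map_sum, Yel]
  refine Finset.sum_congr rfl fun i _ => ?_
  rw [PowerSeries.coeff_C_mul, PowerSeries.coeff_map, geomSeries, PowerSeries.coeff_mk,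
    Nat.add_sub_cancel]
  exact (Algebra.commutes _ _).symm

lemma coeff_geom_sq (p : Pn R n) (m : ℕ) :
    PowerSeries.coeff m (geomSeries R n p ^ 2) = (m + 1) • p ^ m := by
  rw [sq, PowerSeries.coeff_mul]
  have hc : ∀ q ∈ Finset.HasAntidiagonal.antidiagonal m,
      PowerSeries.coeff q.1 (geomSeries R n p) *
        PowerSeries.coeff q.2 (geomSeries R n p) = p ^ m := by
    intro q hq
    rw [geomSeries, PowerSeries.coeff_mk, PowerSeries.coeff_mk, ← pow_add,
      Finset.HasAntidiagonal.mem_antidiagonal.1 hq]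
  rw [Finset.sum_congr rfl hc, Finset.sum_const, Finset.Nat.card_antidiagonal]

lemma coeff_Sseries (m : ℕ) :
    PowerSeries.coeff m (Sseries R n) =
      (m + 1) • ∑ k : Fin n,
        algebraMap (Pn R n) (Bn R n) (tv R n k ^ m) * (uu R n k * vv R n k) := by
  rw [Sseries, map_sum, Finset.smul_sum]
  refine Finset.sum_congr rfl fun i _ => ?_
  rw [PowerSeries.coeff_C_mul, PowerSeries.coeff_map, coeff_geom_sq, map_nsmul,
    mul_smul_comm, ← Algebra.commutes]

lemma coeff_mapE (i : ℕ) :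
    PowerSeries.coeff i
        (PowerSeries.map (algebraMap (Pn R n) (Bn R n)) (Eseries R n)) =
      algebraMap (Pn R n) (Bn R n) ((-1) ^ i * MvPolynomial.esymm (Fin n) R i) := by
  rw [PowerSeries.coeff_map]
  congr 1
  rw [show Eseries R n = ∏ k ∈ Finset.univ,
        (1 - PowerSeries.C (tv R n k) * PowerSeries.X) from rfl,
    coeff_prod_one_sub]
  rfl

end AuxLemmas2

/-- `E(s)·(X(s)·Y(s) − S(s))` is a polynomial in `s` of degree at most `n − 2`:
its coefficient of `s^l` vanishes for all `l ≥ n − 1`.  In particular, taking the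
coefficient of `s^{n-1}` gives
`∑_{i=0}^{n-1} (-1)^{i+1} e_i·((n-i)·∑_k t_k^{n-i-1} u_k v_k − ∑_{j=0}^{n-i-1} X_{n-i-j}·Y_{j+1}) = 0`
in `B`. -/
theorem Eseries_mul_XY_sub_S_degree_le (n : ℕ) (hn : 1 ≤ n) :
    (∀ l, n - 1 ≤ l →
      PowerSeries.coeff l
        (PowerSeries.map (algebraMap (Pn ℤ n) (Bn ℤ n)) (Eseries ℤ n) *
          (Xseries ℤ n * Yseries ℤ n - Sseries ℤ n)) = 0) ∧
    ∑ i ∈ Finset.range n, ((-1 : Bn ℤ n) ^ (i + 1)) *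
      (algebraMap (Pn ℤ n) (Bn ℤ n) (MvPolynomial.esymm (Fin n) ℤ i) *
        ((n - i) • (∑ k : Fin n,
            algebraMap (Pn ℤ n) (Bn ℤ n) (tv ℤ n k ^ (n - i - 1)) * (uu ℤ n k * vv ℤ n k)) -
          ∑ j ∈ Finset.range (n - i), Xel ℤ n (n - i - j) * Yel ℤ n (j + 1))) = 0 := by
  refine ⟨fun l hl => coeff_vanish ℤ n l hl, ?_⟩
  have h0 := coeff_vanish ℤ n (n - 1) le_rfl
  rw [PowerSeries.coeff_mul, Finset.Nat.sum_antidiagonal_eq_sum_range_succ_mk] at h0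
  dsimp only at h0
  rw [show (n - 1).succ = n from by omega] at h0
  refine Eq.trans (Finset.sum_congr rfl fun i hi => ?_) h0
  rw [Finset.mem_range] at hi
  rw [coeff_mapE, map_sub, coeff_Sseries, PowerSeries.coeff_mul,
    Finset.Nat.sum_antidiagonal_eq_sum_range_succ_mk]
  simp only [coeff_Xseries, coeff_Yseries]
  rw [show n - 1 - i + 1 = n - i from by omega, show n - 1 - i = n - i - 1 from by omega]
  have hXY : (∑ j ∈ Finset.range (n - i), Xel ℤ n (n - i - j) * Yel ℤ n (j + 1))
      = ∑ k ∈ Finset.range (n - i), Xel ℤ n (k + 1) * Yel ℤ n (n - i - 1 - k + 1) := by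
    rw [← Finset.sum_range_reflect]
    refine Finset.sum_congr rfl fun j hj => ?_
    rw [Finset.mem_range] at hj
    rw [show n - i - (n - i - 1 - j) = j + 1 from by omega]
  rw [hXY]
  simp only [map_mul, map_pow, map_neg, map_one]
  rw [sign_helper]
  rw [show (n - i - 1).succ = n - i from by omega]

end
end

section
/- Let R be a commutative ring and ε_1,…,ε_n ∈ R elements with ε_i² = 0 for all i. For k ≥ 0 set Z̄_k = e_k(ε_1,…,ε_n), the k-th elementary symmetric polynomial evaluated at ε_1,…,ε_n (so Z̄_0 = 1 and Z̄_k = 0 for k > n). Then for all i, j ≥ 0: Z̄_i·Z̄_j = binom(i+j, i)·Z̄_{i+j}; in particular Z̄_i·Z̄_j = 0 whenever i + j > n. (Thus the Z̄_k satisfy the divided power relations.) -/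
open scoped BigOperators

lemma prod_mul_prod_sq_zero {R : Type*} [CommRing R] {n : ℕ}
    (ε : Fin n → R) (hε : ∀ i, ε i ^ 2 = 0) (I J : Finset (Fin n)) :
    (∏ i ∈ I, ε i) * ∏ i ∈ J, ε i =
      if Disjoint I J then ∏ i ∈ I ∪ J, ε i else 0 := by
  by_cases h : Disjoint I J
  · rw [if_pos h, Finset.prod_union h]
  · rw [if_neg h]
    rw [Finset.not_disjoint_iff] at h
    obtain ⟨k, hkI, hkJ⟩ := h
    rw [← Finset.mul_prod_erase I ε hkI, ← Finset.mul_prod_erase J ε hkJ,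
      mul_mul_mul_comm, ← sq, hε, zero_mul]

/-- **Divided power relations for elementary symmetric functions of square-zero elements.**
Let `R` be a commutative ring and `ε_1, …, ε_n ∈ R` with `ε_i² = 0`.  Put
`Z̄_k = e_k(ε_1,…,ε_n)` (so `Z̄_0 = 1` and `Z̄_k = 0` for `k > n`).  Then
`Z̄_i · Z̄_j = C(i+j, i) · Z̄_{i+j}` for all `i, j ≥ 0`; in particular `Z̄_i·Z̄_j = 0`
whenever `i + j > n`. -/
theorem esymm_sq_zero_divided_powers {R : Type*} [CommRing R] {n : ℕ}
    (ε : Fin n → R) (hε : ∀ i, ε i ^ 2 = 0)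
    (Zbar : ℕ → R)
    (hZbar : ∀ k, Zbar k =
      ∑ I ∈ (Finset.univ.powersetCard k : Finset (Finset (Fin n))), ∏ i ∈ I, ε i) :
    ∀ i j : ℕ, Zbar i * Zbar j = ((i + j).choose i : R) * Zbar (i + j) ∧
      (n < i + j → Zbar i * Zbar j = 0) := by
  intro i j
  have hmain : Zbar i * Zbar j = ((i + j).choose i : R) * Zbar (i + j) := by
    rw [hZbar i, hZbar j, hZbar (i + j), Finset.sum_mul_sum]
    simp_rw [prod_mul_prod_sq_zero ε hε]
    rw [← Finset.sum_product']
    rw [← Finset.sum_filter]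
    rw [Finset.sum_nbij' (i := fun p => (⟨p.1 ∪ p.2, p.1⟩ :
        (K : Finset (Fin n)) × Finset (Fin n)))
      (j := fun q => (q.2, q.1 \ q.2))
      (t := (Finset.univ.powersetCard (i + j)).sigma fun K => K.powersetCard i)
      (g := fun q => ∏ x ∈ q.1, ε x)
      ?_ ?_ ?_ ?_ ?_]
    · rw [Finset.sum_sigma]
      have : ∀ K ∈ Finset.univ.powersetCard (i + j),
          ∑ _I ∈ K.powersetCard i, ∏ x ∈ K, ε x =
            ((i + j).choose i : R) * ∏ x ∈ K, ε x := by
        intro K hK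
        rw [Finset.sum_const, Finset.card_powersetCard,
          (Finset.mem_powersetCard.mp hK).2, nsmul_eq_mul]
      rw [Finset.sum_congr rfl this, Finset.mul_sum]
    · rintro ⟨I, J⟩ hp
      simp only [Finset.mem_filter, Finset.mem_product, Finset.mem_powersetCard] at hp
      obtain ⟨⟨⟨-, hI⟩, -, hJ⟩, hd⟩ := hp
      simp only [Finset.mem_sigma, Finset.mem_powersetCard]
      exact ⟨⟨Finset.subset_univ _, by rw [Finset.card_union_of_disjoint hd, hI, hJ]⟩,
        Finset.subset_union_left, hI⟩
    · rintro ⟨K, I⟩ hq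
      simp only [Finset.mem_sigma, Finset.mem_powersetCard] at hq
      obtain ⟨⟨-, hK⟩, hIK, hI⟩ := hq
      simp only [Finset.mem_filter, Finset.mem_product, Finset.mem_powersetCard]
      refine ⟨⟨⟨Finset.subset_univ _, hI⟩, Finset.subset_univ _, ?_⟩,
        Finset.disjoint_sdiff⟩
      rw [Finset.card_sdiff_of_subset hIK, hK, hI, Nat.add_sub_cancel_left]
    · rintro ⟨I, J⟩ hp
      simp only [Finset.mem_filter] at hp
      simp [Finset.union_sdiff_cancel_left hp.2]
    · rintro ⟨K, I⟩ hq
      simp only [Finset.mem_sigma, Finset.mem_powersetCard] at hq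
      simp [Finset.union_sdiff_of_subset hq.2.1]
    · rintro ⟨I, J⟩ hp; rfl
  refine ⟨hmain, fun h => ?_⟩
  rw [hmain, hZbar]
  rw [Finset.powersetCard_eq_empty.mpr (by simpa using h), Finset.sum_empty, mul_zero]
end
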